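/- Covariant Stinespring theorem (uniqueness): Under the hypotheses of the covariant Stinespring theorem, if (π_X, v, w, H', K') is a covariant representation of (G,η,X), V' ∈ L(H,H'), W' : K → K' a coisometry, satisfying Φ(x) = W'* π_X(x) V', v_t V' = V' u_t, w_t W' = W' u'_t, [π_X(X)V'H] = K', and [π_X(X)*W'K] = H', then there exist unitaries U₁ ∈ L(H_Φ, H') and U₂ ∈ L(K_Φ, K') such that U₂ π_Φ(x) = π_X(x) U₁ for all x ∈ X, v_t U₁ = U₁ v^Φ_t and w_t U₂ = U₂ w^Φ_t for all t ∈ G, V' = U₁ V_Φ and W' = U₂ W_Φ. -/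

import Mathlib

noncomputable section

open ContinuousLinearMap

local notation "⟪" x ", " y "⟫" => @inner ℂ _ _ x y

private lemma dense_of_tc {E : Type*} [NormedAddCommGroup E] [NormedSpace ℂ E]
    (S : Submodule ℂ E) (hS : S.topologicalClosure = ⊤) : Dense (S : Set E) := by
  rw [dense_iff_closure_eq, ← Submodule.topologicalClosure_coe, hS, Submodule.top_coe]

private lemma ext_of_inner {E : Type*} [NormedAddCommGroup E] [InnerProductSpace ℂ E]
    [CompleteSpace E] (s : Set E) (hs : (Submodule.span ℂ s).topologicalClosure = ⊤)
    {x y : E} (h : ∀ u ∈ s, ⟪u, x⟫ = ⟪u, y⟫) : x = y := by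
  rw [Submodule.topologicalClosure_eq_top_iff] at hs
  have hxy : x - y ∈ (Submodule.span ℂ s)ᗮ := by
    rw [Submodule.mem_orthogonal]
    intro u hu
    induction hu using Submodule.span_induction with
    | mem u hu => rw [inner_sub_right, h u hu, sub_self]
    | zero => simp
    | add u v _ _ hu hv => rw [inner_add_left, hu, hv, add_zero]
    | smul c u _ hu => rw [inner_smul_left, hu, mul_zero]
  rw [hs, Submodule.mem_bot, sub_eq_zero] at hxy
  exact hxy

private lemma ext_clm {E F : Type*} [NormedAddCommGroup E] [NormedAddCommGroup F]
    [NormedSpace ℂ E] [NormedSpace ℂ F] (s : Set E)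
    (hs : (Submodule.span ℂ s).topologicalClosure = ⊤)
    (f g : E →L[ℂ] F) (h : ∀ u ∈ s, f u = g u) : ∀ x, f x = g x := by
  have hd : Dense (Submodule.span ℂ s : Set E) := dense_of_tc _ hs
  have heq : Set.EqOn f g (Submodule.span ℂ s : Set E) := by
    intro u hu
    induction hu using Submodule.span_induction with
    | mem u hu => exact h u hu
    | zero => simp
    | add u v _ _ hu hv => simp only [map_add, hu, hv]
    | smul c u _ hu => simp only [map_smul, hu]
  exact fun x => congrFun (Continuous.ext_on hd f.continuous g.continuous heq) x

private lemma ext_fun {E F : Type*} [NormedAddCommGroup E] [NormedAddCommGroup F]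
    [NormedSpace ℂ E] [NormedSpace ℂ F] (s : Set E)
    (hs : (Submodule.span ℂ s).topologicalClosure = ⊤)
    {f g : E → F} (hfc : Continuous f) (hgc : Continuous g)
    (hfa : ∀ a b, f (a + b) = f a + f b) (hga : ∀ a b, g (a + b) = g a + g b)
    (hfs : ∀ (c : ℂ) a, f (c • a) = c • f a) (hgs : ∀ (c : ℂ) a, g (c • a) = c • g a)
    (h : ∀ u ∈ s, f u = g u) : ∀ x, f x = g x := by
  have hd : Dense (Submodule.span ℂ s : Set E) := dense_of_tc _ hs
  have heq : Set.EqOn f g (Submodule.span ℂ s : Set E) := by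
    intro u hu
    induction hu using Submodule.span_induction with
    | mem u hu => exact h u hu
    | zero =>
        have h0 : f 0 = g 0 := by
          have hf0 : f 0 = 0 := by
            have := hfs 0 0; simpa using this
          have hg0 : g 0 = 0 := by
            have := hgs 0 0; simpa using this
          rw [hf0, hg0]
        exact h0
    | add u v _ _ hu hv => rw [hfa, hga, hu, hv]
    | smul c u _ hu => rw [hfs, hgs, hu]
  exact fun x => congrFun (Continuous.ext_on hd hfc hgc heq) x

private lemma isometry_gadget {E F : Type*}
    [NormedAddCommGroup E] [InnerProductSpace ℂ E] [CompleteSpace E]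
    [NormedAddCommGroup F] [InnerProductSpace ℂ F] [CompleteSpace F]
    (s : Set (E × F))
    (hinner : ∀ p ∈ s, ∀ q ∈ s, ⟪p.1, q.1⟫ = ⟪p.2, q.2⟫)
    (hd1 : (Submodule.span ℂ (Prod.fst '' s)).topologicalClosure = ⊤)
    (hd2 : (Submodule.span ℂ (Prod.snd '' s)).topologicalClosure = ⊤) :
    ∃ U : E ≃ₗᵢ[ℂ] F, ∀ p ∈ s, U p.1 = p.2 := by
  set M := Submodule.span ℂ s with hM
  have key : ∀ p ∈ M, ∀ q ∈ M, ⟪p.1, q.1⟫ = ⟪p.2, q.2⟫ := by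
    intro p hp q hq
    induction hp, hq using Submodule.span_induction₂ with
    | mem_mem p q hp hq => exact hinner p hp q hq
    | zero_left => simp
    | zero_right => simp
    | add_left p q r _ _ _ h1 h2 =>
        simp only [Prod.fst_add, Prod.snd_add, inner_add_left, h1, h2]
    | add_right p q r _ _ _ h1 h2 =>
        simp only [Prod.fst_add, Prod.snd_add, inner_add_right, h1, h2]
    | smul_left c p q _ _ h1 => simp only [Prod.smul_fst, Prod.smul_snd, inner_smul_left, h1]
    | smul_right c p q _ _ h1 => simp only [Prod.smul_fst, Prod.smul_snd, inner_smul_right, h1]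
  have hnorm : ∀ p : E × F, p ∈ M → ‖p.1‖ = ‖p.2‖ := by
    intro p hp
    have h1 : (‖p.1‖ : ℂ) ^ 2 = (‖p.2‖ : ℂ) ^ 2 := by
      have hk := key p hp p hp
      rw [inner_self_eq_norm_sq_to_K, inner_self_eq_norm_sq_to_K] at hk
      exact hk
    have h2 : ‖p.1‖ ^ 2 = ‖p.2‖ ^ 2 := by exact_mod_cast h1
    nlinarith [norm_nonneg p.1, norm_nonneg p.2]
  let e₁ : M →L[ℂ] E := (ContinuousLinearMap.fst ℂ E F).comp M.subtypeL
  let e₂ : M →L[ℂ] F := (ContinuousLinearMap.snd ℂ E F).comp M.subtypeL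
  have he₁ : ∀ p : M, e₁ p = (p : E × F).1 := fun p => rfl
  have he₂ : ∀ p : M, e₂ p = (p : E × F).2 := fun p => rfl
  have he₁iso : Isometry e₁ := by
    apply AddMonoidHomClass.isometry_of_norm
    intro p
    rw [he₁]
    have : ‖p‖ = ‖(p : E × F)‖ := rfl
    rw [this, Prod.norm_def, hnorm _ p.2, max_self]
  have hrange : Set.range e₁ = (Submodule.span ℂ (Prod.fst '' s) : Set E) := by
    have himg : Prod.fst '' s = ⇑(LinearMap.fst ℂ E F) '' s := rfl
    rw [himg, ← Submodule.map_span (LinearMap.fst ℂ E F)]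
    ext y
    constructor
    · rintro ⟨p, rfl⟩
      exact Submodule.mem_map.mpr ⟨p, p.2, rfl⟩
    · rintro hy
      obtain ⟨q, hq, rfl⟩ := Submodule.mem_map.mp hy
      exact ⟨⟨q, hq⟩, rfl⟩
  have hd : DenseRange e₁ := by
    rw [DenseRange, hrange]
    exact dense_of_tc _ hd1
  have hui : IsUniformInducing e₁ := he₁iso.isUniformInducing
  let U : E →L[ℂ] F := e₂.extend e₁
  have hUe : ∀ p : M, U (e₁ p) = e₂ p := fun p => ContinuousLinearMap.extend_eq _ hd hui _
  have hUnorm : ∀ x : E, ‖U x‖ = ‖x‖ := by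
    have heq : Set.EqOn (fun x => ‖U x‖) (fun x => ‖x‖) (Set.range e₁) := by
      rintro _ ⟨p, rfl⟩
      simp only
      rw [hUe p, he₂, he₁, hnorm _ p.2]
    exact fun x => congrFun (Continuous.ext_on hd (continuous_norm.comp U.continuous)
      continuous_norm heq) x
  let Uli : E →ₗᵢ[ℂ] F := ⟨(U : E →ₗ[ℂ] F), hUnorm⟩
  have hUlival : ∀ x, Uli x = U x := fun x => rfl
  have hgen : ∀ p ∈ s, Uli p.1 = p.2 := by
    intro p hp
    have hpM : p ∈ M := Submodule.subset_span hp
    have := hUe ⟨p, hpM⟩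
    rw [he₁, he₂] at this
    exact this
  have hclosed : IsClosed (Set.range Uli) := Uli.isometry.isClosedEmbedding.isClosed_range
  have hsub : Submodule.span ℂ (Prod.snd '' s) ≤ LinearMap.range Uli.toLinearMap := by
    rw [Submodule.span_le]
    rintro _ ⟨p, hp, rfl⟩
    exact ⟨p.1, hgen p hp⟩
  have hsurj : Function.Surjective Uli := by
    have hcl2 : IsClosed ((LinearMap.range Uli.toLinearMap : Submodule ℂ F) : Set F) := by
      have : ((LinearMap.range Uli.toLinearMap : Submodule ℂ F) : Set F) = Set.range Uli := by
        ext y; simp [LinearMap.mem_range]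
      rw [this]; exact hclosed
    have h2 := Submodule.topologicalClosure_minimal _ hsub hcl2
    rw [hd2, top_le_iff] at h2
    intro y
    have : y ∈ LinearMap.range Uli.toLinearMap := h2 ▸ Submodule.mem_top
    obtain ⟨x, hx⟩ := this
    exact ⟨x, hx⟩
  refine ⟨LinearIsometryEquiv.ofSurjective Uli hsurj, ?_⟩
  intro p hp
  rw [show (LinearIsometryEquiv.ofSurjective Uli hsurj) p.1 = Uli p.1 from
    congrFun (LinearIsometryEquiv.coe_ofSurjective Uli hsurj) p.1]
  exact hgen p hp



noncomputable section

open ContinuousLinearMap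

/-- An element of the form `star c * c` (positivity in a star ring). -/
def StarPos {B : Type*} [Mul B] [Star B] (b : B) : Prop := ∃ c : B, b = star c * c

/-- Complete positivity of a `ℂ`-linear map between star rings. -/
def IsCPMap {A B : Type*} [NonUnitalRing A] [StarRing A] [Module ℂ A]
    [NonUnitalRing B] [StarRing B] [Module ℂ B] (φ : A →ₗ[ℂ] B) : Prop :=
  ∀ (n : ℕ) (M : Matrix (Fin n) (Fin n) A), StarPos M → StarPos (M.map ⇑φ)

/-- A unitary representation of a group `G` on a Hilbert space. -/
def IsUnitaryRep {G H' : Type*} [Group G] [NormedAddCommGroup H']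
    [InnerProductSpace ℂ H'] [CompleteSpace H'] (v : G → H' →L[ℂ] H') : Prop :=
  v 1 = 1 ∧ (∀ s t, v (s * t) = v s ∘L v t) ∧
    ∀ t, adjoint (v t) ∘L v t = 1 ∧ v t ∘L adjoint (v t) = 1

set_option maxHeartbeats 2000000 in
/-- covariant Stinespring theorem (uniqueness): any two covariant
Stinespring constructions `(π_Φ, v^Φ, w^Φ, H_Φ, K_Φ, V_Φ, W_Φ)` and
`(π_X, v, w, H', K', V', W')` for the same `(u',u)`-covariant completely positive
map `Φ` are unitarily equivalent. -/
theorem stmt_15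
    {A : Type*} [NormedRing A] [StarRing A] [CStarRing A] [NormedAlgebra ℂ A]
    [CompleteSpace A] [StarModule ℂ A]
    {H K HΦ KΦ H' K' : Type*}
    [NormedAddCommGroup H] [InnerProductSpace ℂ H] [CompleteSpace H]
    [NormedAddCommGroup K] [InnerProductSpace ℂ K] [CompleteSpace K]
    [NormedAddCommGroup HΦ] [InnerProductSpace ℂ HΦ] [CompleteSpace HΦ]
    [NormedAddCommGroup KΦ] [InnerProductSpace ℂ KΦ] [CompleteSpace KΦ]
    [NormedAddCommGroup H'] [InnerProductSpace ℂ H'] [CompleteSpace H']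
    [NormedAddCommGroup K'] [InnerProductSpace ℂ K'] [CompleteSpace K']
    {X : Type*} {G : Type*} [Group G]
    (E : X → X → A)
    (hfull : (Submodule.span ℂ {a : A | ∃ x y, a = E x y}).topologicalClosure = ⊤)
    (η : G → X → X) (hη_one : ∀ x, η 1 x = x)
    (hη_mul : ∀ s t x, η (s * t) x = η s (η t x))
    (u : G → H →L[ℂ] H) (hu : IsUnitaryRep u)
    (u' : G → K →L[ℂ] K) (hu' : IsUnitaryRep u')
    (Φ : X → H →L[ℂ] K) (φ : A →ₗ[ℂ] (H →L[ℂ] H)) (hcp : IsCPMap φ)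
    (hΦ : ∀ x y, adjoint (Φ x) ∘L Φ y = φ (E x y))
    (hcov : ∀ t x, Φ (η t x) = u' t ∘L Φ x ∘L adjoint (u t))
    -- the covariant Stinespring construction `(πΦ, vΦ, wΦ, HΦ, KΦ, VΦ, WΦ)`
    (πΦ : X → HΦ →L[ℂ] KΦ) (ρΦ : A →⋆ₐ[ℂ] (HΦ →L[ℂ] HΦ))
    (hrepΦ : ∀ x y, adjoint (πΦ x) ∘L πΦ y = ρΦ (E x y))
    (vΦ : G → HΦ →L[ℂ] HΦ) (hvΦ : IsUnitaryRep vΦ)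
    (wΦ : G → KΦ →L[ℂ] KΦ) (hwΦ : IsUnitaryRep wΦ)
    (hcovΦ : ∀ t x, πΦ (η t x) = wΦ t ∘L πΦ x ∘L adjoint (vΦ t))
    (VΦ : H →L[ℂ] HΦ) (WΦ : K →L[ℂ] KΦ) (hWΦ : WΦ ∘L adjoint WΦ = 1)
    (ha : ∀ x, Φ x = adjoint WΦ ∘L πΦ x ∘L VΦ)
    (hb : ∀ t, vΦ t ∘L VΦ = VΦ ∘L u t)
    (hc : ∀ t, wΦ t ∘L WΦ = WΦ ∘L u' t)
    (hdΦ : (Submodule.span ℂ {k : KΦ | ∃ x h, k = πΦ x (VΦ h)}).topologicalClosure = ⊤)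
    (heΦ : (Submodule.span ℂ {h : HΦ | ∃ x k, h = adjoint (πΦ x) (WΦ k)}).topologicalClosure = ⊤)
    -- a second covariant Stinespring construction `(πX, v, w, H', K', V', W')`
    (πX : X → H' →L[ℂ] K') (ρ' : A →⋆ₐ[ℂ] (H' →L[ℂ] H'))
    (hrep' : ∀ x y, adjoint (πX x) ∘L πX y = ρ' (E x y))
    (v : G → H' →L[ℂ] H') (hv : IsUnitaryRep v)
    (w : G → K' →L[ℂ] K') (hw : IsUnitaryRep w)
    (hcov' : ∀ t x, πX (η t x) = w t ∘L πX x ∘L adjoint (v t))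
    (V' : H →L[ℂ] H') (W' : K →L[ℂ] K') (hW' : W' ∘L adjoint W' = 1)
    (ha' : ∀ x, Φ x = adjoint W' ∘L πX x ∘L V')
    (hb' : ∀ t, v t ∘L V' = V' ∘L u t)
    (hc' : ∀ t, w t ∘L W' = W' ∘L u' t)
    (hd' : (Submodule.span ℂ {k : K' | ∃ x h, k = πX x (V' h)}).topologicalClosure = ⊤)
    (he' : (Submodule.span ℂ {h : H' | ∃ x k, h = adjoint (πX x) (W' k)}).topologicalClosure = ⊤) :
    ∃ (U₁ : HΦ ≃ₗᵢ[ℂ] H') (U₂ : KΦ ≃ₗᵢ[ℂ] K'),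
      (∀ x h, U₂ (πΦ x h) = πX x (U₁ h)) ∧
        (∀ t h, v t (U₁ h) = U₁ (vΦ t h)) ∧
        (∀ t k, w t (U₂ k) = U₂ (wΦ t k)) ∧
        (∀ h, U₁ (VΦ h) = V' h) ∧ ∀ k, U₂ (WΦ k) = W' k := by
  classical
  letI : CStarAlgebra A :=
    { ‹NormedRing A›, ‹StarRing A›, ‹CStarRing A›, ‹NormedAlgebra ℂ A›,
      ‹CompleteSpace A›, ‹StarModule ℂ A› with }
  -- continuity of the representations ρΦ and ρ'
  have hρΦc : Continuous ρΦ :=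
    AddMonoidHomClass.continuous_of_bound ρΦ 1 fun a => by
      simpa using NonUnitalStarAlgHom.norm_apply_le ρΦ a
  have hρ'c : Continuous ρ' :=
    AddMonoidHomClass.continuous_of_bound ρ' 1 fun a => by
      simpa using NonUnitalStarAlgHom.norm_apply_le ρ' a
  -- pointwise versions of basic identities
  have hΦpt : ∀ (x : X) (g : H), adjoint WΦ (πΦ x (VΦ g)) = Φ x g := by
    intro x g; rw [ha x]; rfl
  have hΦpt' : ∀ (x : X) (g : H), adjoint W' (πX x (V' g)) = Φ x g := by
    intro x g; rw [ha' x]; rfl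
  have hWins : ∀ ξ : KΦ, WΦ (adjoint WΦ ξ) = ξ := by
    intro ξ
    have := congrArg (fun T : KΦ →L[ℂ] KΦ => T ξ) hWΦ
    simpa using this
  have hW'ins : ∀ ξ : K', W' (adjoint W' ξ) = ξ := by
    intro ξ
    have := congrArg (fun T : K' →L[ℂ] K' => T ξ) hW'
    simpa using this
  have hadjΦ : ∀ (x y : X) (ξ ζ : HΦ), ⟪πΦ x ξ, πΦ y ζ⟫ = ⟪ξ, ρΦ (E x y) ζ⟫ := by
    intro x y ξ ζ
    rw [← hrepΦ x y, ContinuousLinearMap.comp_apply, adjoint_inner_right]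
  have hadjX : ∀ (x y : X) (ξ ζ : H'), ⟪πX x ξ, πX y ζ⟫ = ⟪ξ, ρ' (E x y) ζ⟫ := by
    intro x y ξ ζ
    rw [← hrep' x y, ContinuousLinearMap.comp_apply, adjoint_inner_right]
  have hadj2Φ : ∀ (y w₀ : X) (ξ : HΦ), adjoint (πΦ y) (πΦ w₀ ξ) = ρΦ (E y w₀) ξ := by
    intro y w₀ ξ; rw [← hrepΦ y w₀]; rfl
  have hadj2X : ∀ (y w₀ : X) (ξ : H'), adjoint (πX y) (πX w₀ ξ) = ρ' (E y w₀) ξ := by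
    intro y w₀ ξ; rw [← hrep' y w₀]; rfl
  -- the key generator identity
  have hgenΦ : ∀ (x y : X) (g h : H), ⟪VΦ g, ρΦ (E x y) (VΦ h)⟫ = ⟪Φ x g, Φ y h⟫ := by
    intro x y g h
    rw [← hadjΦ x y (VΦ g) (VΦ h)]
    rw [← hWins (πΦ y (VΦ h)), ← adjoint_inner_left WΦ, hΦpt, hΦpt]
  have hgenX : ∀ (x y : X) (g h : H), ⟪V' g, ρ' (E x y) (V' h)⟫ = ⟪Φ x g, Φ y h⟫ := by
    intro x y g h
    rw [← hadjX x y (V' g) (V' h)]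
    rw [← hW'ins (πX y (V' h)), ← adjoint_inner_left W', hΦpt', hΦpt']
  -- extend to all of A by density
  have hT : ∀ (a : A) (g h : H), ⟪VΦ g, ρΦ a (VΦ h)⟫ = ⟪V' g, ρ' a (V' h)⟫ := by
    intro a g h
    have hc1 : Continuous fun b : A => (⟪VΦ g, ρΦ b (VΦ h)⟫ : ℂ) := by
      apply Continuous.inner continuous_const
      exact (ContinuousLinearMap.apply ℂ HΦ (VΦ h)).continuous.comp hρΦc
    have hc2 : Continuous fun b : A => (⟪V' g, ρ' b (V' h)⟫ : ℂ) := by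
      apply Continuous.inner continuous_const
      exact (ContinuousLinearMap.apply ℂ H' (V' h)).continuous.comp hρ'c
    have hspan : ∀ b ∈ Submodule.span ℂ {a : A | ∃ x y, a = E x y},
        (⟪VΦ g, ρΦ b (VΦ h)⟫ : ℂ) = ⟪V' g, ρ' b (V' h)⟫ := by
      intro b hb
      induction hb using Submodule.span_induction with
      | mem b hb =>
          obtain ⟨x, y, rfl⟩ := hb
          rw [hgenΦ, hgenX]
      | zero => simp
      | add b c _ _ h1 h2 =>
          simp only [map_add, ContinuousLinearMap.add_apply, inner_add_right, h1, h2]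
      | smul c b _ h1 =>
          simp only [map_smul, ContinuousLinearMap.smul_apply, inner_smul_right, h1]
    have hcl : IsClosed {b : A | (⟪VΦ g, ρΦ b (VΦ h)⟫ : ℂ) = ⟪V' g, ρ' b (V' h)⟫} :=
      isClosed_eq hc1 hc2
    have hdenseA : Dense (Submodule.span ℂ {a : A | ∃ x y, a = E x y} : Set A) :=
      dense_of_tc _ hfull
    have hsub : closure (Submodule.span ℂ {a : A | ∃ x y, a = E x y} : Set A) ⊆
        {b : A | (⟪VΦ g, ρΦ b (VΦ h)⟫ : ℂ) = ⟪V' g, ρ' b (V' h)⟫} :=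
      hcl.closure_subset_iff.mpr fun b hb => hspan b hb
    have : a ∈ closure (Submodule.span ℂ {a : A | ∃ x y, a = E x y} : Set A) := by
      rw [hdenseA.closure_eq]; trivial
    exact hsub this
  -- inner products of generators agree
  have hs₂ : ∀ (x y : X) (g h : H),
      ⟪πΦ x (VΦ g), πΦ y (VΦ h)⟫ = ⟪πX x (V' g), πX y (V' h)⟫ := by
    intro x y g h
    rw [hadjΦ, hadjX, hgenΦ, hgenX]
  -- construct U₂
  obtain ⟨U₂, hU₂⟩ := isometry_gadget
    {p : KΦ × K' | ∃ x h, p = (πΦ x (VΦ h), πX x (V' h))}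
    (by rintro p ⟨x, g, rfl⟩ q ⟨y, h, rfl⟩; exact hs₂ x y g h)
    (by
      have himg : Prod.fst '' {p : KΦ × K' | ∃ x h, p = (πΦ x (VΦ h), πX x (V' h))} =
          {k : KΦ | ∃ x h, k = πΦ x (VΦ h)} := by
        ext k
        constructor
        · rintro ⟨p, ⟨x, h, rfl⟩, rfl⟩; exact ⟨x, h, rfl⟩
        · rintro ⟨x, h, rfl⟩; exact ⟨_, ⟨x, h, rfl⟩, rfl⟩
      rw [himg]; exact hdΦ)
    (by
      have himg : Prod.snd '' {p : KΦ × K' | ∃ x h, p = (πΦ x (VΦ h), πX x (V' h))} =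
          {k : K' | ∃ x h, k = πX x (V' h)} := by
        ext k
        constructor
        · rintro ⟨p, ⟨x, h, rfl⟩, rfl⟩; exact ⟨x, h, rfl⟩
        · rintro ⟨x, h, rfl⟩; exact ⟨_, ⟨x, h, rfl⟩, rfl⟩
      rw [himg]; exact hd')
  have hU₂gen : ∀ (x : X) (h : H), U₂ (πΦ x (VΦ h)) = πX x (V' h) := by
    intro x h
    exact hU₂ (πΦ x (VΦ h), πX x (V' h)) ⟨x, h, rfl⟩
  -- the middle identity
  have hB : ∀ (b : A) (x z : X) (g h : H),
      ⟪πΦ z (VΦ h), πΦ x (ρΦ b (VΦ g))⟫ = ⟪πX z (V' h), πX x (ρ' b (V' g))⟫ := by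
    intro b x z g h
    have hmulΦ : ∀ (a₁ a₂ : A) (ξ : HΦ), ρΦ (a₁ * a₂) ξ = ρΦ a₁ (ρΦ a₂ ξ) := by
      intro a₁ a₂ ξ; rw [map_mul]; rfl
    have hmulX : ∀ (a₁ a₂ : A) (ξ : H'), ρ' (a₁ * a₂) ξ = ρ' a₁ (ρ' a₂ ξ) := by
      intro a₁ a₂ ξ; rw [map_mul]; rfl
    rw [hadjΦ, hadjX, ← hmulΦ, ← hmulX, hT]
  -- key intertwining of "rank one"-type operators
  have hC : ∀ (x y : X) (ζ : KΦ),
      U₂ (πΦ x (adjoint (πΦ y) ζ)) = πX x (adjoint (πX y) (U₂ ζ)) := by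
    intro x y
    apply ext_fun {k : KΦ | ∃ w₀ g, k = πΦ w₀ (VΦ g)} hdΦ
      (f := fun ζ => U₂ (πΦ x (adjoint (πΦ y) ζ)))
      (g := fun ζ => πX x (adjoint (πX y) (U₂ ζ)))
      (U₂.continuous.comp ((πΦ x).continuous.comp (adjoint (πΦ y)).continuous))
      ((πX x).continuous.comp ((adjoint (πX y)).continuous.comp U₂.continuous))
      (by intro a b; simp [map_add]) (by intro a b; simp [map_add])
      (by intro c a; simp [map_smul]) (by intro c a; simp [map_smul])
    rintro _ ⟨w₀, g, rfl⟩
    show U₂ (πΦ x (adjoint (πΦ y) (πΦ w₀ (VΦ g)))) =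
      πX x (adjoint (πX y) (U₂ (πΦ w₀ (VΦ g))))
    rw [hU₂gen, hadj2Φ, hadj2X]
    apply ext_of_inner _ hd'
    rintro _ ⟨z, h, rfl⟩
    rw [← hU₂gen z h, LinearIsometryEquiv.inner_map_map, hU₂gen z h, hB]
  -- U₂ maps WΦ to W'
  have hU₂W : ∀ k : K, U₂ (WΦ k) = W' k := by
    intro k
    apply ext_of_inner _ hd'
    rintro _ ⟨z, h, rfl⟩
    rw [← hU₂gen z h, LinearIsometryEquiv.inner_map_map, hU₂gen z h]
    rw [← adjoint_inner_left WΦ, ← adjoint_inner_left W', hΦpt, hΦpt']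
  -- construct U₁
  obtain ⟨U₁, hU₁⟩ := isometry_gadget
    {p : HΦ × H' | ∃ y k, p = (adjoint (πΦ y) (WΦ k), adjoint (πX y) (W' k))}
    (by
      rintro p ⟨x, k, rfl⟩ q ⟨y, k', rfl⟩
      show ⟪adjoint (πΦ x) (WΦ k), adjoint (πΦ y) (WΦ k')⟫ =
        ⟪adjoint (πX x) (W' k), adjoint (πX y) (W' k')⟫
      rw [adjoint_inner_left, adjoint_inner_left, ← hU₂W k, ← hU₂W k', ← hC,
        LinearIsometryEquiv.inner_map_map])
    (by
      have himg : Prod.fst ''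
          {p : HΦ × H' | ∃ y k, p = (adjoint (πΦ y) (WΦ k), adjoint (πX y) (W' k))} =
          {h : HΦ | ∃ x k, h = adjoint (πΦ x) (WΦ k)} := by
        ext m
        constructor
        · rintro ⟨p, ⟨y, k, rfl⟩, rfl⟩; exact ⟨y, k, rfl⟩
        · rintro ⟨y, k, rfl⟩; exact ⟨_, ⟨y, k, rfl⟩, rfl⟩
      rw [himg]; exact heΦ)
    (by
      have himg : Prod.snd ''
          {p : HΦ × H' | ∃ y k, p = (adjoint (πΦ y) (WΦ k), adjoint (πX y) (W' k))} =
          {h : H' | ∃ x k, h = adjoint (πX x) (W' k)} := by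
        ext m
        constructor
        · rintro ⟨p, ⟨y, k, rfl⟩, rfl⟩; exact ⟨y, k, rfl⟩
        · rintro ⟨y, k, rfl⟩; exact ⟨_, ⟨y, k, rfl⟩, rfl⟩
      rw [himg]; exact he')
  have hU₁gen : ∀ (y : X) (k : K), U₁ (adjoint (πΦ y) (WΦ k)) = adjoint (πX y) (W' k) := by
    intro y k
    exact hU₁ (adjoint (πΦ y) (WΦ k), adjoint (πX y) (W' k)) ⟨y, k, rfl⟩
  -- covariance rearrangements
  have hv1 : ∀ (t : G) (ξ : HΦ), adjoint (vΦ t) (vΦ t ξ) = ξ := by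
    intro t ξ
    have := congrArg (fun T : HΦ →L[ℂ] HΦ => T ξ) (hvΦ.2.2 t).1
    simpa using this
  have hw1 : ∀ (t : G) (ξ : KΦ), adjoint (wΦ t) (wΦ t ξ) = ξ := by
    intro t ξ
    have := congrArg (fun T : KΦ →L[ℂ] KΦ => T ξ) (hwΦ.2.2 t).1
    simpa using this
  have hwπ : ∀ (t : G) (x : X) (ξ : HΦ), wΦ t (πΦ x ξ) = πΦ (η t x) (vΦ t ξ) := by
    intro t x ξ
    have := congrArg (fun T : HΦ →L[ℂ] KΦ => T (vΦ t ξ)) (hcovΦ t x)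
    simp only [ContinuousLinearMap.comp_apply] at this
    rw [this, hv1]
  have hwπ' : ∀ (t : G) (x : X) (ξ : H'), w t (πX x ξ) = πX (η t x) (v t ξ) := by
    intro t x ξ
    have hv1' : ∀ (ξ : H'), adjoint (v t) (v t ξ) = ξ := by
      intro ξ
      have := congrArg (fun T : H' →L[ℂ] H' => T ξ) (hv.2.2 t).1
      simpa using this
    have := congrArg (fun T : H' →L[ℂ] K' => T (v t ξ)) (hcov' t x)
    simp only [ContinuousLinearMap.comp_apply] at this
    rw [this, hv1']
  have hvadjΦ : ∀ (t : G) (y : X) (ξ : KΦ),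
      vΦ t (adjoint (πΦ y) ξ) = adjoint (πΦ (η t y)) (wΦ t ξ) := by
    intro t y ξ
    have h1 : adjoint (πΦ (η t y)) = (vΦ t ∘L adjoint (πΦ y)) ∘L adjoint (wΦ t) := by
      rw [hcovΦ t y, adjoint_comp, adjoint_comp, adjoint_adjoint]
    rw [h1]
    show vΦ t (adjoint (πΦ y) ξ) = vΦ t (adjoint (πΦ y) (adjoint (wΦ t) (wΦ t ξ)))
    rw [hw1]
  have hvadjX : ∀ (t : G) (y : X) (ξ : K'),
      v t (adjoint (πX y) ξ) = adjoint (πX (η t y)) (w t ξ) := by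
    intro t y ξ
    have hw1' : ∀ (ξ : K'), adjoint (w t) (w t ξ) = ξ := by
      intro ξ
      have := congrArg (fun T : K' →L[ℂ] K' => T ξ) (hw.2.2 t).1
      simpa using this
    have h1 : adjoint (πX (η t y)) = (v t ∘L adjoint (πX y)) ∘L adjoint (w t) := by
      rw [hcov' t y, adjoint_comp, adjoint_comp, adjoint_adjoint]
    rw [h1]
    show v t (adjoint (πX y) ξ) = v t (adjoint (πX y) (adjoint (w t) (w t ξ)))
    rw [hw1']
  have hbpt : ∀ (t : G) (h : H), vΦ t (VΦ h) = VΦ (u t h) := by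
    intro t h
    have := congrArg (fun T : H →L[ℂ] HΦ => T h) (hb t)
    simpa using this
  have hbpt' : ∀ (t : G) (h : H), v t (V' h) = V' (u t h) := by
    intro t h
    have := congrArg (fun T : H →L[ℂ] H' => T h) (hb' t)
    simpa using this
  have hcpt : ∀ (t : G) (k : K), wΦ t (WΦ k) = WΦ (u' t k) := by
    intro t k
    have := congrArg (fun T : K →L[ℂ] KΦ => T k) (hc t)
    simpa using this
  have hcpt' : ∀ (t : G) (k : K), w t (W' k) = W' (u' t k) := by
    intro t k
    have := congrArg (fun T : K →L[ℂ] K' => T k) (hc' t)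
    simpa using this
  refine ⟨U₁, U₂, ?_, ?_, ?_, ?_, hU₂W⟩
  · -- U₂ ∘ πΦ x = πX x ∘ U₁
    intro x
    apply ext_fun {m : HΦ | ∃ y k, m = adjoint (πΦ y) (WΦ k)} heΦ
      (f := fun h => U₂ (πΦ x h)) (g := fun h => πX x (U₁ h))
      (U₂.continuous.comp (πΦ x).continuous)
      ((πX x).continuous.comp U₁.continuous)
      (by intro a b; simp [map_add]) (by intro a b; simp [map_add])
      (by intro c a; simp [map_smul]) (by intro c a; simp [map_smul])
    rintro _ ⟨y, k, rfl⟩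
    show U₂ (πΦ x (adjoint (πΦ y) (WΦ k))) = πX x (U₁ (adjoint (πΦ y) (WΦ k)))
    rw [hC, hU₂W, hU₁gen]
  · -- v t ∘ U₁ = U₁ ∘ vΦ t
    intro t
    apply ext_fun {m : HΦ | ∃ y k, m = adjoint (πΦ y) (WΦ k)} heΦ
      (f := fun h => v t (U₁ h)) (g := fun h => U₁ (vΦ t h))
      ((v t).continuous.comp U₁.continuous)
      (U₁.continuous.comp (vΦ t).continuous)
      (by intro a b; simp [map_add]) (by intro a b; simp [map_add])
      (by intro c a; simp [map_smul]) (by intro c a; simp [map_smul])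
    rintro _ ⟨y, k, rfl⟩
    show v t (U₁ (adjoint (πΦ y) (WΦ k))) = U₁ (vΦ t (adjoint (πΦ y) (WΦ k)))
    rw [hU₁gen, hvadjΦ, hcpt, hU₁gen, ← hcpt', hvadjX]
  · -- w t ∘ U₂ = U₂ ∘ wΦ t
    intro t
    apply ext_fun {k : KΦ | ∃ x h, k = πΦ x (VΦ h)} hdΦ
      (f := fun k => w t (U₂ k)) (g := fun k => U₂ (wΦ t k))
      ((w t).continuous.comp U₂.continuous)
      (U₂.continuous.comp (wΦ t).continuous)
      (by intro a b; simp [map_add]) (by intro a b; simp [map_add])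
      (by intro c a; simp [map_smul]) (by intro c a; simp [map_smul])
    rintro _ ⟨x, h, rfl⟩
    show w t (U₂ (πΦ x (VΦ h))) = U₂ (wΦ t (πΦ x (VΦ h)))
    rw [hU₂gen, hwπ, hbpt, hU₂gen, ← hbpt', hwπ']
  · -- U₁ ∘ VΦ = V'
    intro h
    apply ext_of_inner _ he'
    rintro _ ⟨y, k, rfl⟩
    rw [← hU₁gen y k, LinearIsometryEquiv.inner_map_map, hU₁gen y k]
    rw [adjoint_inner_left, adjoint_inner_left, ← adjoint_inner_right WΦ,
      ← adjoint_inner_right W', hΦpt, hΦpt']
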